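/- (Baker–Pixley, adapted.) Let D be a finite set, let k ≥ 3, and let F be a set of finitary operations on D containing a near-unanimity operation of arity k. Let n ≥ k−1, S ⊆ D^n and v ∈ D^n. Then v ∈ Cl_F(S) if and only if for every set of indices I ⊆ [n] with |I| = k−1, the restriction v_I belongs to Cl_F(S_I). -/

import Mathlib

/-- A finitary operation on `D`: an arity `t` together with a function `D^t → D`. -/
abbrev Op (D : Type*) := Σ t : ℕ, (Fin t → D) → D

/-- The closure of a set `S` of vectors under the coordinatewise application of the
operations in `F`. -/
inductive Cl {D ι : Type*} (F : Set (Op D)) (S : Set (ι → D)) : (ι → D) → Prop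
  | base {v : ι → D} : v ∈ S → Cl F S v
  | app {t : ℕ} {f : (Fin t → D) → D} (hf : (⟨t, f⟩ : Op D) ∈ F)
      (vs : Fin t → ι → D) (hvs : ∀ j, Cl F S (vs j)) :
      Cl F S (fun i => f fun j => vs j i)

theorem Cl_restrict {D ι κ : Type*} {F : Set (Op D)} {S : Set (ι → D)} {v : ι → D}
    (h : Cl F S v) (e : κ → ι) : Cl F ((fun w => w ∘ e) '' S) (v ∘ e) := by
  induction h with
  | base hv => exact Cl.base ⟨_, hv, rfl⟩
  | app hf vs hvs ih => exact Cl.app hf (fun j => vs j ∘ e) ih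

theorem Cl_lift {D ι κ : Type*} {F : Set (Op D)} {S : Set (ι → D)} (e : κ → ι) {u : κ → D}
    (h : Cl F ((fun w => w ∘ e) '' S) u) : ∃ w, Cl F S w ∧ w ∘ e = u := by
  induction h with
  | base hv => obtain ⟨w, hw, rfl⟩ := hv; exact ⟨w, Cl.base hw, rfl⟩
  | @app t g hg vs hvs ih =>
    choose ws hws hres using ih
    refine ⟨fun i => g fun j => ws j i, Cl.app hg ws hws, ?_⟩
    funext x
    exact congrArg g (funext fun j => congrFun (hres j) x)

/-- Baker–Pixley: if `F` contains a near-unanimity operation of arity `k ≥ 3` over a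
finite domain `D`, then `v ∈ Cl_F(S)` iff `v_I ∈ Cl_F(S_I)` for every index set `I` of
size `k - 1`. -/
theorem baker_pixley {D : Type*} [Finite D] {k : ℕ} (hk : 3 ≤ k) (F : Set (Op D))
    (f : (Fin k → D) → D) (hfF : (⟨k, f⟩ : Op D) ∈ F)
    (hnu : ∀ (x : D) (xs : Fin k → D) (j : Fin k), (∀ i, i ≠ j → xs i = x) → f xs = x)
    {n : ℕ} (hn : k - 1 ≤ n) (S : Set (Fin n → D)) (v : Fin n → D) :
    Cl F S v ↔ ∀ I : Finset (Fin n), I.card = k - 1 →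
      Cl F ((fun w => fun i : I => w i.1) '' S) (fun i : I => v i.1) := by
  constructor
  · intro h I _
    exact Cl_restrict h (fun i : I => i.1)
  · intro hI
    have key : ∀ m, k - 1 ≤ m → ∀ I : Finset (Fin n), I.card = m →
        Cl F ((fun w => fun i : I => w i.1) '' S) (fun i : I => v i.1) := by
      intro m hm
      induction m, hm using Nat.le_induction with
      | base => exact fun I hI' => hI I hI'
      | succ m hm ih =>
        intro I hIcard
        have hkI : k ≤ I.card := by omega
        obtain ⟨J, hJI, hJcard⟩ := Finset.exists_subset_card_eq (s := I) hkI
        set g : Fin k → Fin n := fun j => (J.orderIsoOfFin hJcard j : Fin n) with hg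
        have hginj : Function.Injective g := fun a b hab => by
          have := (J.orderIsoOfFin hJcard).injective (Subtype.ext hab)
          exact this
        have hgI : ∀ j, g j ∈ I := fun j => hJI (J.orderIsoOfFin hJcard j).2
        -- lift for each j
        have hw : ∀ j : Fin k, ∃ w : I → D, Cl F ((fun w => fun i : I => w i.1) '' S) w ∧
            ∀ i : I, (i : Fin n) ≠ g j → w i = v i.1 := by
          intro j
          set e : (I.erase (g j) : Finset (Fin n)) → I :=
            fun x => ⟨x.1, Finset.mem_of_mem_erase x.2⟩ with he
          have hcard : (I.erase (g j)).card = m := by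
            rw [Finset.card_erase_of_mem (hgI j), hIcard]; omega
          have h1 := ih (I.erase (g j)) hcard
          have himg : (fun w => fun i : (I.erase (g j) : Finset (Fin n)) => w i.1) '' S
              = (fun w => w ∘ e) '' ((fun w => fun i : I => w i.1) '' S) := by
            rw [Set.image_image]; rfl
          rw [himg] at h1
          obtain ⟨w, hwCl, hwe⟩ := Cl_lift e h1
          refine ⟨w, hwCl, fun i hi => ?_⟩
          have hmem : (i : Fin n) ∈ I.erase (g j) := Finset.mem_erase.2 ⟨hi, i.2⟩
          have := congrFun hwe ⟨i.1, hmem⟩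
          simpa [he] using this
        choose w hwCl hwv using hw
        have happ := Cl.app hfF w hwCl
        have heq : (fun i : I => f fun j => w j i) = (fun i : I => v i.1) := by
          funext i
          by_cases hex : ∃ j0 : Fin k, g j0 = (i : Fin n)
          · obtain ⟨j0, hj0⟩ := hex
            exact hnu (v i.1) _ j0 fun j hj =>
              hwv j i (by rw [← hj0]; exact fun h => hj (hginj h.symm))
          · push_neg at hex
            exact hnu (v i.1) _ ⟨0, by omega⟩ fun j _ => hwv j i fun h => hex j h.symm
        rw [heq] at happ
        exact happ
    have hu := key n (by omega) Finset.univ (by simp)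
    have h2 := Cl_restrict hu (fun i : Fin n => (⟨i, Finset.mem_univ i⟩ : (Finset.univ : Finset (Fin n))))
    have himg : (fun w => w ∘ fun i : Fin n => (⟨i, Finset.mem_univ i⟩ : (Finset.univ : Finset (Fin n)))) ''
        ((fun w => fun i : (Finset.univ : Finset (Fin n)) => w i.1) '' S) = S := by
      rw [Set.image_image]
      exact Set.image_id S
    rw [himg] at h2
    exact h2
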